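/- Let G be a finite graph on n vertices with even degrees d_1, …, d_n. Then the number of Eulerian orientations of G is at least ∏_{k=1}^n C(d_k, d_k/2) / 2^{d_k/2}. -/

import Mathlib

open Finset

/-- `D` is an orientation of the graph `G`: a set of directed edges containing
exactly one direction of each edge of `G`. -/
def IsOrientation {V : Type*} (G : SimpleGraph V) (D : Finset (V × V)) : Prop :=
  (∀ p ∈ D, G.Adj p.1 p.2) ∧ ∀ u v, G.Adj u v → ((u, v) ∈ D ↔ (v, u) ∉ D)

/-- An orientation is Eulerian if at every vertex the out-degree equals the in-degree. -/
def IsEulerianOrientation {V : Type*} [Fintype V] [DecidableEq V] (G : SimpleGraph V)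
    (D : Finset (V × V)) : Prop :=
  IsOrientation G D ∧
    ∀ v : V, (D.filter (fun p => p.1 = v)).card = (D.filter (fun p => p.2 = v)).card

section Exist
variable {α : Type*} [Fintype α] [DecidableEq α]
variable (σ τ : α → α)

noncomputable def compPerm (hσ : Function.Involutive σ) (hτ : Function.Involutive τ) :
    Equiv.Perm α := (Function.Involutive.toPerm τ hτ).trans (Function.Involutive.toPerm σ hσ)

@[simp] lemma compPerm_apply (hσ : Function.Involutive σ) (hτ : Function.Involutive τ) (a : α) :
    compPerm σ τ hσ hτ a = σ (τ a) := rfl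

lemma iter_conj (hσ : Function.Involutive σ) (hτ : Function.Involutive τ) (k : ℕ) (x : α) :
    ((compPerm σ τ hσ hτ) ^ k) (σ (((compPerm σ τ hσ hτ) ^ k) x)) = σ x := by
  induction k generalizing x with
  | zero => simp
  | succ k ih =>
    set e := compPerm σ τ hσ hτ with he
    have h1 : (e ^ (k+1)) x = e ((e ^ k) x) := by
      rw [pow_succ']; rfl
    have h2 : ∀ z, (e ^ (k+1)) z = (e ^ k) (e z) := by
      intro z; rw [pow_succ]; rfl
    rw [h1, h2]
    have key : ∀ y, e (σ (e y)) = σ y := by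
      intro y
      rw [he, compPerm_apply, compPerm_apply, hσ (τ y), hτ y]
    rw [key]
    exact ih x

lemma no_sigma_in_orbit (hσ : Function.Involutive σ) (hτ : Function.Involutive τ)
    (hσf : ∀ a, σ a ≠ a) (hτf : ∀ a, τ a ≠ a) (n : ℕ) (a : α) :
    ((compPerm σ τ hσ hτ) ^ n) a ≠ σ a := by
  set e := compPerm σ τ hσ hτ with he
  intro h
  rcases Nat.even_or_odd n with ⟨k, hk⟩ | ⟨k, hk⟩
  · have h2 : (e ^ k) ((e ^ k) a) = σ a := by
      rw [← h, hk, ← Equiv.Perm.mul_apply, ← pow_add]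
    have h3 := iter_conj σ τ hσ hτ k a
    rw [← he] at h3
    have h4 : σ ((e ^ k) a) = (e ^ k) a := by
      apply (e ^ k).injective; rw [h3, h2]
    exact hσf _ h4
  · have h2 : (e ^ (k+1)) ((e ^ k) a) = σ a := by
      rw [← h, hk, ← Equiv.Perm.mul_apply, ← pow_add]
      ring_nf
    have h3 := iter_conj σ τ hσ hτ (k+1) a
    rw [← he] at h3
    have h4 : σ ((e ^ (k+1)) a) = (e ^ k) a := by
      apply (e ^ (k+1)).injective; rw [h3, h2]
    have hpow : (e ^ (k+1)) a = e ((e ^ k) a) := by rw [pow_succ']; rfl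
    rw [hpow] at h4
    have h5 : τ ((e ^ k) a) = (e ^ k) a := by
      have hstep : τ ((e ^ k) a) = τ (σ (e ((e ^ k) a))) := by rw [h4]
      rw [hstep]
      apply e.injective
      show e (τ (σ (e ((e ^ k) a)))) = e ((e ^ k) a)
      calc e (τ (σ (e ((e ^ k) a)))) = σ (τ (τ (σ (e ((e ^ k) a))))) := by rw [he]; rfl
        _ = σ (σ (e ((e ^ k) a))) := by rw [hτ]
        _ = e ((e ^ k) a) := hσ _
    exact hτf _ h5

lemma transversal_aux (hσ : Function.Involutive σ) (hτ : Function.Involutive τ)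
    (hσf : ∀ a, σ a ≠ a) (hτf : ∀ a, τ a ≠ a) :
    ∀ (n : ℕ) (s : Finset α), s.card ≤ n → (∀ a ∈ s, σ a ∈ s) → (∀ a ∈ s, τ a ∈ s) →
    ∃ T : Finset α, T ⊆ s ∧ (∀ a ∈ s, ((compPerm σ τ hσ hτ) a ∈ T ↔ a ∈ T)) ∧
      (∀ a ∈ s, (a ∈ T ↔ σ a ∉ T)) := by
  classical
  set e := compPerm σ τ hσ hτ with he
  intro n
  induction n with
  | zero =>
    intro s hcard _ _
    refine ⟨∅, by simp, ?_, ?_⟩ <;>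
      · intro a ha; rw [Finset.card_eq_zero.mp (Nat.le_zero.mp hcard)] at ha; simp at ha
  | succ n ih =>
    intro s hcard hsσ hsτ
    rcases s.eq_empty_or_nonempty with rfl | ⟨a₀, ha₀⟩
    · exact ⟨∅, by simp, by simp, by simp⟩
    · set O : Finset α := s.filter (fun x => e.SameCycle a₀ x) with hO
      set Oσ : Finset α := O.image σ with hOσ
      have ha₀O : a₀ ∈ O := by simp [hO, ha₀, Equiv.Perm.SameCycle.refl]
      have hOs : O ⊆ s := Finset.filter_subset _ _
      have hOσs : Oσ ⊆ s := by
        intro x hx; rcases Finset.mem_image.mp hx with ⟨y, hy, rfl⟩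
        exact hsσ y (hOs hy)
      have memO : ∀ x, x ∈ O ↔ x ∈ s ∧ e.SameCycle a₀ x := by
        intro x; simp [hO]
      have memOσ : ∀ x, x ∈ Oσ ↔ σ x ∈ O := by
        intro x
        constructor
        · rintro hx; rcases Finset.mem_image.mp hx with ⟨y, hy, rfl⟩
          rwa [hσ y]
        · intro hx; exact Finset.mem_image.mpr ⟨σ x, hx, hσ x⟩
      have hdisj : ∀ x, x ∈ O → x ∉ Oσ := by
        intro x hx hx'
        have h1 : e.SameCycle a₀ x := ((memO x).mp hx).2
        have h2 : e.SameCycle a₀ (σ x) := ((memO _).mp ((memOσ x).mp hx')).2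
        have h3 : e.SameCycle x (σ x) := h1.symm.trans h2
        rcases h3.exists_pow_eq' with ⟨m, hm, hmeq⟩
        exact no_sigma_in_orbit σ τ hσ hτ hσf hτf m x hmeq
      set s' := s \ (O ∪ Oσ) with hs'
      have hs'mem : ∀ x, x ∈ s' ↔ x ∈ s ∧ x ∉ O ∧ x ∉ Oσ := by
        intro x; simp [hs', Finset.mem_sdiff, Finset.mem_union, not_or]
      have hs'card : s'.card ≤ n := by
        have hlt : s'.card < s.card := by
          apply Finset.card_lt_card
          constructor
          · exact Finset.sdiff_subset
          · intro hsub
            have := (hs'mem a₀).mp (hsub ha₀)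
            exact this.2.1 ha₀O
        omega
      have hs'σ : ∀ a ∈ s', σ a ∈ s' := by
        intro a ha
        obtain ⟨has, haO, haOσ⟩ := (hs'mem a).mp ha
        refine (hs'mem (σ a)).mpr ⟨hsσ a has, ?_, ?_⟩
        · intro h; exact haOσ ((memOσ a).mpr h)
        · intro h; have := (memOσ (σ a)).mp h; rw [hσ a] at this; exact haO this
      have hs'τ : ∀ a ∈ s', τ a ∈ s' := by
        intro a ha
        obtain ⟨has, haO, haOσ⟩ := (hs'mem a).mp ha
        refine (hs'mem (τ a)).mpr ⟨hsτ a has, ?_, ?_⟩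
        · intro h
          have h1 : e.SameCycle a₀ (τ a) := ((memO _).mp h).2
          have h2 : e.SameCycle a₀ (σ a) := by
            have h3 : e (τ a) = σ a := by rw [he, compPerm_apply, hτ a]
            rw [← h3]
            exact Equiv.Perm.SameCycle.apply_right h1
          have h4 : σ a ∈ O := (memO _).mpr ⟨hsσ a has, h2⟩
          exact haOσ ((memOσ a).mpr h4)
        · intro h
          have h1 : σ (τ a) ∈ O := by
            have := (memOσ (τ a)).mp h; exact this
          have h2 : e.SameCycle a₀ (e a) := by
            have h3 : e a = σ (τ a) := by rw [he, compPerm_apply]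
            rw [h3]; exact ((memO _).mp h1).2
          have h4 : e.SameCycle a₀ a := (Equiv.Perm.sameCycle_apply_right).mp h2
          exact haO ((memO a).mpr ⟨has, h4⟩)
      obtain ⟨T', hT's, hT'1, hT'2⟩ := ih s' hs'card hs'σ hs'τ
      have hT'O : ∀ x, x ∈ T' → x ∉ O ∧ x ∉ Oσ := by
        intro x hx
        have := (hs'mem x).mp (hT's hx)
        exact ⟨this.2.1, this.2.2⟩
      have hOσnotO : ∀ x, x ∈ Oσ → x ∉ O := by
        intro x hx hx'; exact hdisj x hx' hx
      refine ⟨T' ∪ O, ?_, ?_, ?_⟩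
      · exact Finset.union_subset (hT's.trans Finset.sdiff_subset) hOs
      · intro a has
        by_cases haO : a ∈ O
        · have h1 : e a ∈ O := by
            refine (memO _).mpr ⟨?_, ?_⟩
            · have : e a = σ (τ a) := by rw [he, compPerm_apply]
              rw [this]; exact hsσ _ (hsτ _ has)
            · exact Equiv.Perm.SameCycle.apply_right ((memO a).mp haO).2
          simp [Finset.mem_union, haO, h1]
        by_cases haOσ : a ∈ Oσ
        · have hσaO : σ a ∈ O := (memOσ a).mp haOσ
          have hτaO : τ a ∈ O := by
            refine (memO _).mpr ⟨hsτ a has, ?_⟩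
            have h3 : e (τ a) = σ a := by rw [he, compPerm_apply, hτ a]
            have := ((memO _).mp hσaO).2
            rw [← h3] at this
            exact (Equiv.Perm.sameCycle_apply_right).mp this
          have heaOσ : e a ∈ Oσ := by
            refine (memOσ _).mpr ?_
            have : σ (e a) = τ a := by rw [he, compPerm_apply, hσ (τ a)]
            rw [this]; exact hτaO
          have heaO : e a ∉ O := hOσnotO _ heaOσ
          have heaT' : e a ∉ T' := fun h => (hT'O _ h).2 heaOσ
          have haT' : a ∉ T' := fun h => (hT'O _ h).2 haOσ
          simp [Finset.mem_union, haO, heaO, heaT', haT']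
        · have has' : a ∈ s' := (hs'mem a).mpr ⟨has, haO, haOσ⟩
          have hea' : e a ∈ s' := by
            have : e a = σ (τ a) := by rw [he, compPerm_apply]
            rw [this]; exact hs'σ _ (hs'τ _ has')
          have heaO : e a ∉ O := ((hs'mem _).mp hea').2.1
          simp only [Finset.mem_union, haO, heaO, or_false]
          exact hT'1 a has'
      · intro a has
        by_cases haO : a ∈ O
        · have hσaOσ : σ a ∈ Oσ := (memOσ (σ a)).mpr (by rw [hσ a]; exact haO)
          have hσaO : σ a ∉ O := hOσnotO _ hσaOσ
          have hσaT' : σ a ∉ T' := fun h => (hT'O _ h).2 hσaOσ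
          simp [Finset.mem_union, haO, hσaO, hσaT']
        by_cases haOσ : a ∈ Oσ
        · have hσaO : σ a ∈ O := (memOσ a).mp haOσ
          have haO' : a ∉ O := haO
          have haT' : a ∉ T' := fun h => (hT'O _ h).2 haOσ
          simp [Finset.mem_union, haO', haT', hσaO]
        · have has' : a ∈ s' := (hs'mem a).mpr ⟨has, haO, haOσ⟩
          have hσa' : σ a ∈ s' := hs'σ _ has'
          have hσaO : σ a ∉ O := ((hs'mem _).mp hσa').2.1
          simp only [Finset.mem_union, haO, hσaO, or_false]
          exact hT'2 a has'

lemma exists_good_coloring (hσ : Function.Involutive σ) (hτ : Function.Involutive τ)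
    (hσf : ∀ a, σ a ≠ a) (hτf : ∀ a, τ a ≠ a) :
    ∃ f : α → Bool, (∀ a, f (σ a) = ! f a) ∧ (∀ a, f (τ a) = ! f a) := by
  classical
  obtain ⟨T, -, h1, h2⟩ := transversal_aux σ τ hσ hτ hσf hτf Finset.univ.card Finset.univ
    le_rfl (by simp) (by simp)
  refine ⟨fun a => decide (a ∈ T), ?_, ?_⟩
  · intro a
    have hiff := h2 a (Finset.mem_univ a)
    show decide (σ a ∈ T) = !decide (a ∈ T)
    by_cases h : a ∈ T
    · rw [decide_eq_false (hiff.mp h), decide_eq_true h]; rfl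
    · rw [decide_eq_true (not_not.mp (fun hc => h (hiff.mpr hc))), decide_eq_false h]; rfl
  · intro a
    have hA := h1 a (Finset.mem_univ a)
    rw [compPerm_apply] at hA
    have hB := h2 (τ a) (Finset.mem_univ (τ a))
    have hiff : τ a ∈ T ↔ ¬ (a ∈ T) := by tauto
    show decide (τ a ∈ T) = !decide (a ∈ T)
    by_cases h : a ∈ T
    · rw [decide_eq_false (fun hc => (hiff.mp hc) h), decide_eq_true h]; rfl
    · rw [decide_eq_true (hiff.mpr h), decide_eq_false h]; rfl
end Exist

section Abstract
variable {α : Type*} [Fintype α] [DecidableEq α]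

/-- fiber of the block map -/
def fib (b : α → ℕ) (v : ℕ) : Finset α := Finset.univ.filter (fun a => b a = v)

/-- Eulerian coloring -/
def IsEul (σ : α → α) (b : α → ℕ) (f : α → Bool) : Prop :=
  (∀ a, f (σ a) = ! f a) ∧
    ∀ v : ℕ, 2 * ((fib b v).filter (fun a => f a = true)).card = (fib b v).card

noncomputable def eulCount (σ : α → α) (b : α → ℕ) : ℕ := by
  classical exact ((Finset.univ : Finset (α → Bool)).filter (fun f => IsEul σ b f)).card

noncomputable def cfun (d : ℕ) : ℝ := (d.choose (d / 2) : ℝ) / 2 ^ (d / 2)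

lemma cfun_pos (d : ℕ) : 0 < cfun d := by
  unfold cfun
  apply div_pos
  · exact_mod_cast Nat.cast_pos.mpr (Nat.choose_pos (Nat.div_le_self d 2))
  · positivity

lemma pair_filter_card (f : α → Bool) (x y : α) (hxy : x ≠ y) (hf : f y = !f x) :
    (({x, y} : Finset α).filter (fun a => f a = true)).card = 1 := by
  cases hx : f x <;> rw [hx] at hf <;> simp at hf <;>
    · rw [Finset.filter_insert, Finset.filter_singleton]
      simp [hx, hf, hxy]

lemma base_case (σ : α → α) (hσ2 : Function.Involutive σ) (hσ1 : ∀ a, σ a ≠ a) (b : α → ℕ)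
    (heven : ∀ v, Even (fib b v).card) (hsmall : ∀ v, (fib b v).card ≤ 2) :
    1 ≤ eulCount σ b := by
  classical
  have hself : ∀ a : α, a ∈ fib b (b a) := by intro a; simp [fib]
  have hcard2 : ∀ a : α, (fib b (b a)).card = 2 := by
    intro a
    have h1 : 0 < (fib b (b a)).card := Finset.card_pos.mpr ⟨a, hself a⟩
    have h2 := heven (b a)
    have h3 := hsmall (b a)
    rcases h2 with ⟨k, hk⟩
    omega
  have hex : ∀ a : α, ∃ c, c ∈ fib b (b a) ∧ c ≠ a ∧ ∀ x ∈ fib b (b a), x = a ∨ x = c := by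
    intro a
    obtain ⟨x, y, hxy, hset⟩ := Finset.card_eq_two.mp (hcard2 a)
    have ha := hself a
    rw [hset] at ha
    rcases Finset.mem_insert.mp ha with rfl | ha'
    · exact ⟨y, by rw [hset]; simp, fun h => hxy h.symm, fun z hz => by
        rw [hset] at hz; simpa using hz⟩
    · have : a = y := by simpa using ha'
      subst this
      exact ⟨x, by rw [hset]; simp, hxy, fun z hz => by
        rw [hset] at hz; rcases Finset.mem_insert.mp hz with rfl | h
        · exact Or.inr rfl
        · exact Or.inl (by simpa using h)⟩
  set τ : α → α := fun a => Classical.choose (hex a) with hτdef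
  have hτmem : ∀ a, τ a ∈ fib b (b a) := fun a => (Classical.choose_spec (hex a)).1
  have hτne : ∀ a, τ a ≠ a := fun a => (Classical.choose_spec (hex a)).2.1
  have hτcover : ∀ a, ∀ x ∈ fib b (b a), x = a ∨ x = τ a :=
    fun a => (Classical.choose_spec (hex a)).2.2
  have hbτ : ∀ a, b (τ a) = b a := by
    intro a; have := hτmem a; simp [fib] at this; exact this
  have hτinv : Function.Involutive τ := by
    intro a
    have h1 : τ (τ a) ∈ fib b (b (τ a)) := hτmem (τ a)
    rw [hbτ a] at h1
    rcases hτcover a _ h1 with h | h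
    · exact h
    · exact absurd h (hτne (τ a))
  obtain ⟨f, hf1, hf2⟩ := exists_good_coloring σ τ hσ2 hτinv hσ1 hτne
  have hEul : IsEul σ b f := by
    refine ⟨hf1, ?_⟩
    intro v
    rcases Finset.eq_empty_or_nonempty (fib b v) with h | ⟨x, hx⟩
    · simp [h]
    · have hbx : b x = v := by simp [fib] at hx; exact hx
      have hfib : fib b v = {x, τ x} := by
        apply Finset.Subset.antisymm
        · intro z hz
          rcases hτcover x z (by rwa [hbx]) with rfl | rfl <;> simp
        · intro z hz
          rcases Finset.mem_insert.mp hz with rfl | hz'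
          · exact hx
          · have : z = τ x := by simpa using hz'
            subst this
            have := hτmem x; rwa [hbx] at this
      rw [hfib]
      rw [pair_filter_card f x (τ x) (Ne.symm (hτne x)) (hf2 x)]
      rw [Finset.card_insert_of_notMem (by simp [Ne.symm (hτne x)]), Finset.card_singleton]
  unfold eulCount
  rw [Nat.succ_le_iff, Finset.card_pos]
  exact ⟨f, by simp [hEul]⟩
end Abstract

section Split
variable {α : Type*} [Fintype α] [DecidableEq α]

def splitb (b : α → ℕ) (L : ℕ) (x y : α) : α → ℕ :=
  fun a => if a = x ∨ a = y then L else b a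

lemma pair_filter_card_iff (f : α → Bool) (x y : α) (hxy : x ≠ y) :
    (({x, y} : Finset α).filter (fun a => f a = true)).card = 1 ↔ f x ≠ f y := by
  rw [Finset.filter_insert, Finset.filter_singleton]
  cases hx : f x <;> cases hy : f y <;>
    simp [hx, hy, hxy, Finset.card_insert_of_notMem, Finset.mem_singleton]

lemma fib_split_L (b : α → ℕ) (L : ℕ) (x y : α) (hL : ∀ a, b a ≠ L) :
    fib (splitb b L x y) L = {x, y} := by
  ext a
  simp only [fib, splitb, Finset.mem_filter, Finset.mem_univ, true_and,
    Finset.mem_insert, Finset.mem_singleton]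
  by_cases h : a = x ∨ a = y <;> simp [h, hL a] <;> tauto

lemma fib_split_ne (b : α → ℕ) (L : ℕ) (x y : α) (v : ℕ) (hv : v ≠ L) :
    fib (splitb b L x y) v = (fib b v) \ {x, y} := by
  ext a
  simp only [fib, splitb, Finset.mem_filter, Finset.mem_univ, true_and, Finset.mem_sdiff,
    Finset.mem_insert, Finset.mem_singleton]
  by_cases h : a = x ∨ a = y <;> erw [Finset.mem_filter] <;> simp [h, hv.symm] <;> tauto

lemma fib_split_other (b : α → ℕ) (L : ℕ) (x y : α) (v : ℕ) (hv : v ≠ L)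
    (hvx : b x ≠ v) (hvy : b y ≠ v) :
    fib (splitb b L x y) v = fib b v := by
  rw [fib_split_ne b L x y v hv]
  apply Finset.sdiff_eq_self_of_disjoint
  rw [Finset.disjoint_insert_right, Finset.disjoint_singleton_right]
  constructor <;> simp [fib, hvx, hvy]

lemma isEul_split_iff (σ : α → α) (f : α → Bool) (b : α → ℕ) (v0 L : ℕ) (x y : α)
    (hx : b x = v0) (hy : b y = v0) (hxy : x ≠ y) (hL : ∀ a, b a ≠ L) :
    IsEul σ (splitb b L x y) f ↔ (IsEul σ b f ∧ f x ≠ f y) := by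
  classical
  have hv0L : v0 ≠ L := hx ▸ hL x
  have hxf : x ∈ fib b v0 := by simp [fib, hx]
  have hyf : y ∈ fib b v0 := by simp [fib, hy]
  have hsub : ({x, y} : Finset α) ⊆ fib b v0 := by
    intro z hz; rcases Finset.mem_insert.mp hz with rfl | hz'
    · exact hxf
    · rw [Finset.mem_singleton.mp hz']; exact hyf
  have hpaircard : ({x, y} : Finset α).card = 2 := by
    rw [Finset.card_insert_of_notMem (by simp [hxy]), Finset.card_singleton]
  -- decomposition at v0
  have hdecomp : (fib b v0).card = ((fib b v0) \ {x, y}).card + 2 := by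
    rw [← hpaircard]
    rw [← Finset.card_union_of_disjoint Finset.sdiff_disjoint, Finset.sdiff_union_of_subset hsub]
  have hfdecomp : ((fib b v0).filter (fun a => f a = true)).card =
      (((fib b v0) \ {x, y}).filter (fun a => f a = true)).card +
      (({x, y} : Finset α).filter (fun a => f a = true)).card := by
    rw [← Finset.card_union_of_disjoint
      (Finset.disjoint_filter_filter Finset.sdiff_disjoint), ← Finset.filter_union,
      Finset.sdiff_union_of_subset hsub]
  constructor
  · rintro ⟨h1, h2⟩
    have hfxy : f x ≠ f y := by
      have := h2 L
      rw [fib_split_L b L x y hL] at this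
      rw [hpaircard] at this
      exact (pair_filter_card_iff f x y hxy).mp (by omega)
    refine ⟨⟨h1, ?_⟩, hfxy⟩
    intro v
    by_cases hvv : v = v0
    · subst hvv
      have := h2 v
      rw [fib_split_ne b L x y v hv0L] at this
      have hone := (pair_filter_card_iff f x y hxy).mpr hfxy
      omega
    · by_cases hvL : v = L
      · have hemp : fib b v = ∅ := by
          ext a
          simp only [fib, Finset.mem_filter, Finset.mem_univ, true_and,
            Finset.notMem_empty, iff_false]
          rw [hvL]; exact hL a
        rw [hemp]; simp
      · have := h2 v
        rwa [fib_split_other b L x y v hvL (fun h => hvv (by rw [← h, hx]))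
          (fun h => hvv (by rw [← h, hy]))] at this
  · rintro ⟨⟨h1, h2⟩, hfxy⟩
    refine ⟨h1, ?_⟩
    intro v
    by_cases hvL : v = L
    · rw [hvL, fib_split_L b L x y hL, hpaircard, (pair_filter_card_iff f x y hxy).mpr hfxy]
    · by_cases hvv : v = v0
      · rw [hvv, fib_split_ne b L x y _ hv0L]
        have := h2 v0
        have hone := (pair_filter_card_iff f x y hxy).mpr hfxy
        omega
      · rw [fib_split_other b L x y v hvL (fun h => hvv (by rw [← h, hx]))
          (fun h => hvv (by rw [← h, hy]))]
        exact h2 v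
end Split

section Count
variable {α : Type*} [Fintype α] [DecidableEq α]

lemma offdiag_filter_card (A : Finset α) (f : α → Bool) :
    (A.offDiag.filter (fun p => f p.1 ≠ f p.2)).card =
    2 * ((A.filter (fun a => f a = true)).card * (A.filter (fun a => f a = false)).card) := by
  classical
  have hset : A.offDiag.filter (fun p => f p.1 ≠ f p.2) =
      (A.filter (fun a => f a = true)) ×ˢ (A.filter (fun a => f a = false)) ∪
      (A.filter (fun a => f a = false)) ×ˢ (A.filter (fun a => f a = true)) := by
    ext p
    simp only [Finset.mem_filter, Finset.mem_offDiag, Finset.mem_union, Finset.mem_product]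
    constructor
    · rintro ⟨⟨h1, h2, h3⟩, h4⟩
      cases hf1 : f p.1 <;> cases hf2 : f p.2 <;> simp_all
    · rintro (⟨⟨h1, hf1⟩, h2, hf2⟩ | ⟨⟨h1, hf1⟩, h2, hf2⟩) <;>
        refine ⟨⟨h1, h2, fun he => ?_⟩, by simp [hf1, hf2]⟩ <;> rw [he] at hf1 <;> simp_all
  rw [hset, Finset.card_union_of_disjoint, Finset.card_product, Finset.card_product]
  · ring
  · rw [Finset.disjoint_left]
    rintro p hp hp'
    simp only [Finset.mem_product, Finset.mem_filter] at hp hp'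
    simp_all

lemma count_identity (σ : α → α) (b : α → ℕ) (v0 L : ℕ) (hL : ∀ a, b a ≠ L)
    (m : ℕ) (hm : (fib b v0).card = 2 * m) :
    ∑ p ∈ (fib b v0).offDiag, eulCount σ (splitb b L p.1 p.2)
      = (2 * (m * m)) * eulCount σ b := by
  classical
  have hmem : ∀ z ∈ fib b v0, b z = v0 := by
    intro z hz; simpa [fib] using hz
  have step1 : ∀ p ∈ (fib b v0).offDiag, eulCount σ (splitb b L p.1 p.2) =
      ∑ f : α → Bool, (if IsEul σ b f ∧ f p.1 ≠ f p.2 then 1 else 0) := by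
    intro p hp
    obtain ⟨hp1, hp2, hp12⟩ := Finset.mem_offDiag.mp hp
    unfold eulCount
    rw [Finset.card_filter]
    apply Finset.sum_congr rfl
    intro f _
    exact if_congr (isEul_split_iff σ f b v0 L p.1 p.2 (hmem _ hp1) (hmem _ hp2) hp12 hL) rfl rfl
  rw [Finset.sum_congr rfl step1, Finset.sum_comm]
  have step2 : ∀ f : α → Bool,
      (∑ p ∈ (fib b v0).offDiag, if IsEul σ b f ∧ f p.1 ≠ f p.2 then 1 else 0)
        = if IsEul σ b f then 2 * (m * m) else 0 := by
    intro f
    by_cases hE : IsEul σ b f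
    · simp only [hE, true_and, if_true]
      rw [← Finset.card_filter, offdiag_filter_card]
      have ht := hE.2 v0
      have htot : ((fib b v0).filter (fun a => f a = true)).card +
          ((fib b v0).filter (fun a => f a = false)).card = (fib b v0).card := by
        have hneg : (fib b v0).filter (fun a => f a = false) =
            (fib b v0).filter (fun a => ¬ (f a = true)) :=
          Finset.filter_congr (fun a _ => by cases f a <;> simp)
        rw [hneg]
        exact Finset.card_filter_add_card_filter_not (p := fun a => f a = true)
      have h1 : ((fib b v0).filter (fun a => f a = true)).card = m := by omega
      have h2 : ((fib b v0).filter (fun a => f a = false)).card = m := by omega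
      rw [h1, h2]
    · simp [hE]
  rw [Finset.sum_congr rfl (fun f _ => step2 f)]
  unfold eulCount
  rw [Finset.card_filter, Finset.mul_sum]
  apply Finset.sum_congr rfl
  intro f _
  by_cases hE : IsEul σ b f <;> simp [hE]
end Count

lemma choose_step (k : ℕ) :
    (2*(k+1)).choose (k+1) * ((k+1)*(k+1)) = (2*k).choose k * ((2*(k+1)) * (2*k+1)) := by
  have e1 : (2*k+2) * ((2*k+1).choose k) = (2*k+2).choose (k+1) * (k+1) := by
    simpa using Nat.add_one_mul_choose_eq (2*k+1) k
  have e2 : (2*k+1) * ((2*k).choose k) = (2*k+1).choose (k+1) * (k+1) := by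
    simpa using Nat.add_one_mul_choose_eq (2*k) k
  have h3 : (2*k+1).choose (k+1) = (2*k+1).choose k := by
    have := Nat.choose_symm (by omega : k+1 ≤ 2*k+1)
    simpa [show 2*k+1-(k+1) = k by omega] using this.symm
  calc (2*(k+1)).choose (k+1) * ((k+1)*(k+1))
      = ((2*k+2).choose (k+1) * (k+1)) * (k+1) := by
        rw [show 2*(k+1) = 2*k+2 by ring]; ring
    _ = ((2*k+2) * ((2*k+1).choose k)) * (k+1) := by rw [e1]
    _ = (2*k+2) * (((2*k+1).choose (k+1)) * (k+1)) := by rw [h3]; ring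
    _ = (2*k+2) * ((2*k+1) * ((2*k).choose k)) := by rw [← e2]
    _ = (2*k).choose k * ((2*(k+1)) * (2*k+1)) := by ring

lemma cfun_step (k : ℕ) :
    cfun (2*(k+1)) * (2*(((k:ℝ)+1)*((k:ℝ)+1))) =
      ((2*((k:ℝ)+1)) * (2*(k:ℝ)+1)) * cfun (2*k) := by
  unfold cfun
  rw [show (2*(k+1))/2 = k+1 from by omega, show (2*k)/2 = k from by omega]
  have hnat := choose_step k
  have hcast := congrArg (Nat.cast : ℕ → ℝ) hnat
  push_cast at hcast
  have h2 : (2:ℝ)^(k+1) = 2^k * 2 := by rw [pow_succ]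
  field_simp [h2]
  have hk : ((2*(k+1)).choose (k+1) : ℝ) * ((k:ℝ)+1) = ((2*k).choose k : ℝ) * (2*(2*(k:ℝ)+1)) := by
    have hk1 : (0:ℝ) < (k:ℝ)+1 := by positivity
    apply mul_right_cancel₀ (ne_of_gt hk1)
    linear_combination hcast
  linear_combination (2:ℝ)^k * hk

section Main
variable {α : Type*} [Fintype α] [DecidableEq α]

lemma abstract_main (σ : α → α) (hσ2 : Function.Involutive σ) (hσ1 : ∀ a, σ a ≠ a) :
    ∀ (n : ℕ) (b : α → ℕ), (∀ v, Even (fib b v).card) →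
      (∑ v ∈ Finset.univ.image b, (fib b v).card * (fib b v).card) < n →
      ∏ v ∈ Finset.univ.image b, cfun (fib b v).card ≤ (eulCount σ b : ℝ) := by
  classical
  intro n
  induction n with
  | zero => intro b _ h; omega
  | succ n ih =>
    intro b heven hmeas
    by_cases hsmall : ∀ v, (fib b v).card ≤ 2
    · have hprod : ∏ v ∈ Finset.univ.image b, cfun (fib b v).card = 1 := by
        apply Finset.prod_eq_one
        intro v hv
        obtain ⟨a, -, ha⟩ := Finset.mem_image.mp hv
        have hpos : 0 < (fib b v).card := Finset.card_pos.mpr ⟨a, by simp [fib, ha]⟩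
        obtain ⟨r, hr⟩ := heven v
        have h2 : (fib b v).card = 2 := by have := hsmall v; omega
        rw [h2]
        norm_num [cfun]
      rw [hprod]
      exact_mod_cast base_case σ hσ2 hσ1 b heven hsmall
    · push_neg at hsmall
      obtain ⟨v0, hv0⟩ := hsmall
      obtain ⟨m', hm2⟩ := heven v0
      obtain ⟨k, rfl⟩ : ∃ k, m' = k + 1 := ⟨m' - 1, by omega⟩
      have hk1 : 1 ≤ k := by omega
      have hm : (fib b v0).card = 2*(k+1) := by omega
      set L := (Finset.univ.image b).sup id + 1 with hLdef
      have hL : ∀ a, b a ≠ L := by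
        intro a
        have : b a ≤ (Finset.univ.image b).sup id :=
          Finset.le_sup (f := id) (Finset.mem_image_of_mem b (Finset.mem_univ a))
        omega
      have hLim : L ∉ Finset.univ.image b := by
        intro h; obtain ⟨a, -, ha⟩ := Finset.mem_image.mp h; exact hL a ha
      have hv0im : v0 ∈ Finset.univ.image b := by
        have hpos : 0 < (fib b v0).card := by omega
        obtain ⟨a, ha⟩ := Finset.card_pos.mp hpos
        have hba : b a = v0 := by simpa [fib] using ha
        exact Finset.mem_image.mpr ⟨a, Finset.mem_univ a, hba⟩
      have hv0L : v0 ≠ L := fun h => hLim (h ▸ hv0im)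
      have hmemfib : ∀ z ∈ fib b v0, b z = v0 := fun z hz => by simpa [fib] using hz
      have hpair : ∀ p ∈ (fib b v0).offDiag,
          (cfun (2*k) * ∏ v ∈ (Finset.univ.image b).erase v0, cfun (fib b v).card)
            ≤ (eulCount σ (splitb b L p.1 p.2) : ℝ) := by
        intro p hp
        obtain ⟨hp1, hp2, hp12⟩ := Finset.mem_offDiag.mp hp
        set x := p.1 with hxd; set y := p.2 with hyd
        set b' := splitb b L x y with hb'
        have hbx : b x = v0 := hmemfib _ hp1
        have hby : b y = v0 := hmemfib _ hp2
        have hsub : ({x, y} : Finset α) ⊆ fib b v0 := by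
          intro z hz; rcases Finset.mem_insert.mp hz with rfl | hz'
          · exact hp1
          · rw [Finset.mem_singleton.mp hz']; exact hp2
        have hpc : ({x,y} : Finset α).card = 2 := by
          rw [Finset.card_insert_of_notMem (by simp [hp12]), Finset.card_singleton]
        have hfibL : fib b' L = {x, y} := fib_split_L b L x y hL
        have hfibv0 : fib b' v0 = fib b v0 \ {x,y} := fib_split_ne b L x y v0 hv0L
        have hfib_other : ∀ v, v ≠ L → v ≠ v0 → fib b' v = fib b v := by
          intro v h1 h2
          exact fib_split_other b L x y v h1 (fun h => h2 (by rw [← h, hbx]))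
            (fun h => h2 (by rw [← h, hby]))
        have hcv0 : (fib b' v0).card = 2*k := by
          rw [hfibv0, Finset.card_sdiff_of_subset hsub, hpc, hm]; omega
        have hcL : (fib b' L).card = 2 := by rw [hfibL, hpc]
        have himg : Finset.univ.image b' = insert L (Finset.univ.image b) := by
          apply Finset.Subset.antisymm
          · intro v hv
            obtain ⟨a, -, ha⟩ := Finset.mem_image.mp hv
            by_cases h : a = x ∨ a = y
            · rw [Finset.mem_insert]; left; rw [← ha]; simp [hb', splitb, h]
            · rw [Finset.mem_insert]; right
              refine Finset.mem_image.mpr ⟨a, Finset.mem_univ a, ?_⟩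
              rw [← ha]; simp [hb', splitb, h]
          · intro v hv
            rcases Finset.mem_insert.mp hv with rfl | hv'
            · exact Finset.mem_image.mpr ⟨x, Finset.mem_univ x, by simp [hb', splitb]⟩
            · by_cases hvv0 : v = v0
              · have hpos : 0 < (fib b' v0).card := by omega
                obtain ⟨a, ha⟩ := Finset.card_pos.mp hpos
                subst hvv0
                exact Finset.mem_image.mpr ⟨a, Finset.mem_univ a, by simpa [fib] using ha⟩
              · obtain ⟨a, -, ha⟩ := Finset.mem_image.mp hv'
                refine Finset.mem_image.mpr ⟨a, Finset.mem_univ a, ?_⟩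
                have hax : a ≠ x := fun h => hvv0 (by rw [← ha, h, hbx])
                have hay : a ≠ y := fun h => hvv0 (by rw [← ha, h, hby])
                rw [← ha]; simp [hb', splitb, hax, hay]
        have heven' : ∀ v, Even (fib b' v).card := by
          intro v
          by_cases h1 : v = L
          · rw [h1, hcL]; exact ⟨1, rfl⟩
          · by_cases h2 : v = v0
            · rw [h2, hcv0]; exact ⟨k, by ring⟩
            · rw [hfib_other v h1 h2]; exact heven v
        have hmeas' : (∑ v ∈ Finset.univ.image b', (fib b' v).card * (fib b' v).card) < n := by
          rw [himg, Finset.sum_insert hLim, hcL]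
          have hsplit_sum : ∑ v ∈ Finset.univ.image b, (fib b' v).card * (fib b' v).card
              = 2*k * (2*k) + ∑ v ∈ (Finset.univ.image b).erase v0,
                  (fib b v).card * (fib b v).card := by
            rw [← Finset.add_sum_erase _ _ hv0im, hcv0]
            congr 1
            apply Finset.sum_congr rfl
            intro v hv
            rw [hfib_other v (fun h => hLim (h ▸ (Finset.mem_of_mem_erase hv)))
              (Finset.ne_of_mem_erase hv)]
          have horig : ∑ v ∈ Finset.univ.image b, (fib b v).card * (fib b v).card
              = 2*(k+1)*(2*(k+1)) + ∑ v ∈ (Finset.univ.image b).erase v0,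
                  (fib b v).card * (fib b v).card := by
            rw [← Finset.add_sum_erase _ _ hv0im, hm]
          rw [hsplit_sum]
          rw [horig] at hmeas
          have hlt : 2*2 + 2*k*(2*k) < 2*(k+1)*(2*(k+1)) := by nlinarith
          omega
        have hIH := ih b' heven' hmeas'
        have hprodsplit : ∏ v ∈ Finset.univ.image b', cfun (fib b' v).card
            = cfun 2 * (cfun (2*k) * ∏ v ∈ (Finset.univ.image b).erase v0,
                cfun (fib b v).card) := by
          rw [himg, Finset.prod_insert hLim, hcL]
          congr 1
          rw [← Finset.mul_prod_erase _ _ hv0im, hcv0]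
          congr 1
          apply Finset.prod_congr rfl
          intro v hv
          rw [hfib_other v (fun h => hLim (h ▸ (Finset.mem_of_mem_erase hv)))
            (Finset.ne_of_mem_erase hv)]
        rw [hprodsplit] at hIH
        have hc2 : cfun 2 = 1 := by norm_num [cfun]
        rw [hc2, one_mul] at hIH
        exact hIH
      -- the counting identity
      have hid := count_identity σ b v0 L hL (k+1) hm
      have hoffcard : (fib b v0).offDiag.card = 2*(k+1)*(2*k+1) := by
        rw [Finset.offDiag_card, hm]
        apply Nat.sub_eq_of_eq_add
        ring
      set P : ℝ := cfun (2*k) * ∏ v ∈ (Finset.univ.image b).erase v0, cfun (fib b v).card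
        with hPdef
      have hsum_ge : ((2*(k+1)*(2*k+1) : ℕ) : ℝ) * P
          ≤ ((2*((k+1)*(k+1))) * eulCount σ b : ℕ) := by
        rw [← hid, ← hoffcard]
        calc ((fib b v0).offDiag.card : ℝ) * P = ∑ _p ∈ (fib b v0).offDiag, P := by
              rw [Finset.sum_const, nsmul_eq_mul]
          _ ≤ ∑ p ∈ (fib b v0).offDiag, (eulCount σ (splitb b L p.1 p.2) : ℝ) :=
              Finset.sum_le_sum hpair
          _ = _ := by push_cast; rfl
      -- final assembly
      rw [← Finset.mul_prod_erase _ _ hv0im, hm]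
      have hppos : (0:ℝ) < 2*(((k:ℝ)+1)*((k:ℝ)+1)) := by positivity
      rw [← mul_le_mul_iff_of_pos_right hppos]
      have hPnonneg : (0:ℝ) ≤ ∏ v ∈ (Finset.univ.image b).erase v0, cfun (fib b v).card :=
        Finset.prod_nonneg (fun v _ => (cfun_pos _).le)
      calc cfun (2*(k+1)) * (∏ v ∈ (Finset.univ.image b).erase v0, cfun (fib b v).card)
            * (2*(((k:ℝ)+1)*((k:ℝ)+1)))
          = (cfun (2*(k+1)) * (2*(((k:ℝ)+1)*((k:ℝ)+1))))
            * ∏ v ∈ (Finset.univ.image b).erase v0, cfun (fib b v).card := by ring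
        _ = ((2*((k:ℝ)+1)) * (2*(k:ℝ)+1)) * cfun (2*k)
            * ∏ v ∈ (Finset.univ.image b).erase v0, cfun (fib b v).card := by
            rw [cfun_step k]
        _ = ((2*(k+1)*(2*k+1) : ℕ) : ℝ) * P := by push_cast [hPdef]; ring
        _ ≤ ((2*((k+1)*(k+1))) * eulCount σ b : ℕ) := hsum_ge
        _ = (eulCount σ b : ℝ) * (2*(((k:ℝ)+1)*((k:ℝ)+1))) := by push_cast; ring
end Main

lemma bool_filter_split {γ : Type*} [DecidableEq γ] (A : Finset γ) (f : γ → Bool) :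
    (A.filter (fun a => f a = true)).card + (A.filter (fun a => f a = false)).card = A.card := by
  classical
  have hneg : A.filter (fun a => f a = false) = A.filter (fun a => ¬ (f a = true)) :=
    Finset.filter_congr (fun a _ => by cases f a <;> simp)
  rw [hneg]
  exact Finset.card_filter_add_card_filter_not (p := fun a => f a = true)

set_option maxHeartbeats 1000000 in
theorem stmt19 {V : Type*} [Fintype V] [DecidableEq V] (G : SimpleGraph V)
    [DecidableRel G.Adj] (heven : ∀ v : V, Even (G.degree v)) :
    (∏ v : V, ((G.degree v).choose (G.degree v / 2) : ℝ) / 2 ^ (G.degree v / 2)) ≤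
      ({D : Finset (V × V) | IsEulerianOrientation G D}.ncard : ℝ) := by
  classical
  obtain ⟨enc, henc⟩ : ∃ f : V → ℕ, Function.Injective f :=
    ⟨fun v => (Fintype.equivFin V v : ℕ),
      fun u v h => (Fintype.equivFin V).injective (Fin.val_injective h)⟩
  set σfun : {p : V × V // G.Adj p.1 p.2} → {p : V × V // G.Adj p.1 p.2} :=
    fun a => ⟨(a.1.2, a.1.1), G.adj_symm a.2⟩ with hσdef
  set bfun : {p : V × V // G.Adj p.1 p.2} → ℕ := fun a => enc a.1.1 with hbdef
  have hσ2 : Function.Involutive σfun := by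
    intro a; apply Subtype.ext; simp [hσdef]
  have hσ1 : ∀ a, σfun a ≠ a := by
    intro a h
    have h1 : a.1.2 = a.1.1 := congrArg (fun z => z.1.1) h
    exact G.ne_of_adj a.2 h1.symm
  have hecast : ∀ u v : V, enc u = enc v → u = v := fun u v h => henc h
  have hfibcard : ∀ v : V, (fib bfun (enc v)).card = G.degree v := by
    intro v
    rw [← SimpleGraph.card_neighborFinset_eq_degree]
    apply Finset.card_bij (fun a _ => a.1.2)
    · intro a ha
      have hb : enc a.1.1 = enc v := by simpa [fib, hbdef] using ha
      have hfst : a.1.1 = v := hecast _ _ hb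
      rw [SimpleGraph.mem_neighborFinset]
      exact hfst ▸ a.2
    · intro a ha a' ha' hsnd
      have hb : a.1.1 = v := hecast _ _ (by simpa [fib, hbdef] using ha)
      have hb' : a'.1.1 = v := hecast _ _ (by simpa [fib, hbdef] using ha')
      apply Subtype.ext
      exact Prod.ext (hb.trans hb'.symm) hsnd
    · intro w hw
      rw [SimpleGraph.mem_neighborFinset] at hw
      exact ⟨⟨(v, w), hw⟩, by simp [fib, hbdef], rfl⟩
  have hevenfib : ∀ u, Even (fib bfun u).card := by
    intro u
    by_cases hu : ∃ v : V, enc v = u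
    · obtain ⟨v, rfl⟩ := hu; rw [hfibcard v]; exact heven v
    · have hemp : fib bfun u = ∅ := by
        ext a
        simp only [fib, Finset.mem_filter, Finset.mem_univ, true_and,
          Finset.notMem_empty, iff_false]
        exact fun h => hu ⟨a.1.1, h⟩
      simp [hemp]
  have habst := abstract_main σfun hσ2 hσ1
    ((∑ v ∈ Finset.univ.image bfun, (fib bfun v).card * (fib bfun v).card) + 1) bfun hevenfib
    (Nat.lt_succ_self _)
  -- product equality
  have hP1 : ∏ v : V, cfun (G.degree v)
      = ∏ u ∈ Finset.univ.image bfun, cfun (fib bfun u).card := by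
    have hWsub : Finset.univ.image bfun ⊆ Finset.univ.image (enc) := by
      intro u hu
      obtain ⟨a, -, ha⟩ := Finset.mem_image.mp hu
      exact Finset.mem_image.mpr ⟨a.1.1, Finset.mem_univ _, ha⟩
    calc ∏ v : V, cfun (G.degree v)
        = ∏ v : V, cfun ((fib bfun (enc v)).card) :=
          Finset.prod_congr rfl (fun v _ => by rw [hfibcard])
      _ = ∏ u ∈ Finset.univ.image (enc), cfun (fib bfun u).card :=
          (Finset.prod_image (s := Finset.univ) (g := enc) (f := fun u => cfun (fib bfun u).card) (fun x _ y _ h => hecast x y h)).symm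
      _ = ∏ u ∈ Finset.univ.image bfun, cfun (fib bfun u).card := by
          refine (Finset.prod_subset hWsub ?_).symm
          intro u _ hnotin
          have hemp : fib bfun u = ∅ := by
            ext a
            simp only [fib, Finset.mem_filter, Finset.mem_univ, true_and,
              Finset.notMem_empty, iff_false]
            exact fun h => hnotin (Finset.mem_image.mpr ⟨a, Finset.mem_univ a, h⟩)
          rw [hemp]
          norm_num [cfun]
  -- the orientation map
  set Φ : ({p : V × V // G.Adj p.1 p.2} → Bool) → Finset (V × V) :=
    fun f => Finset.univ.filter (fun p : V × V => ∃ h : G.Adj p.1 p.2, f ⟨p, h⟩ = true)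
    with hΦdef
  have hΦmem : ∀ f (p : V × V), p ∈ Φ f ↔ ∃ h : G.Adj p.1 p.2, f ⟨p, h⟩ = true := by
    intro f p; simp [hΦdef]
  have hΦmem' : ∀ f (a : {p : V × V // G.Adj p.1 p.2}), a.1 ∈ Φ f ↔ f a = true := by
    intro f a
    rw [hΦmem]
    constructor
    · rintro ⟨h, hf⟩
      rwa [show (⟨a.1, h⟩ : {p : V × V // G.Adj p.1 p.2}) = a from Subtype.ext rfl] at hf
    · intro hf
      exact ⟨a.2, by rwa [show (⟨a.1, a.2⟩ : {p : V × V // G.Adj p.1 p.2}) = a from Subtype.ext rfl]⟩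
  have hcard_out : ∀ (f : {p : V × V // G.Adj p.1 p.2} → Bool) (v : V),
      ((Φ f).filter (fun p => p.1 = v)).card
        = ((fib bfun (enc v)).filter (fun a => f a = true)).card := by
    intro f v
    apply Finset.card_bij (fun p hp => (⟨p, by
      have := (Finset.mem_filter.mp hp).1
      exact ((hΦmem f p).mp this).choose⟩ : {p : V × V // G.Adj p.1 p.2}))
    · intro p hp
      obtain ⟨hp1, hp2⟩ := Finset.mem_filter.mp hp
      refine Finset.mem_filter.mpr ⟨?_, ?_⟩
      · simp only [fib, Finset.mem_filter, Finset.mem_univ, true_and, hbdef]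
        rw [hp2]
      · obtain ⟨h, hf⟩ := (hΦmem f p).mp hp1
        rwa [show (⟨p, _⟩ : {p : V × V // G.Adj p.1 p.2}) = ⟨p, h⟩ from Subtype.ext rfl]
    · intro p hp p' hp' heq
      exact congrArg Subtype.val heq
    · intro a ha
      obtain ⟨ha1, ha2⟩ := Finset.mem_filter.mp ha
      have hav : a.1.1 = v := by
        apply hecast
        simpa [fib, hbdef] using ha1
      refine ⟨a.1, Finset.mem_filter.mpr ⟨(hΦmem' f a).mpr ha2, hav⟩, ?_⟩
      exact Subtype.ext rfl
  have hcard_in : ∀ (f : {p : V × V // G.Adj p.1 p.2} → Bool),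
      (∀ a, f (σfun a) = ! f a) → ∀ v : V,
      ((Φ f).filter (fun p => p.2 = v)).card
        = ((fib bfun (enc v)).filter (fun a => f a = false)).card := by
    intro f hfσ v
    apply Finset.card_bij (fun p hp => σfun (⟨p, by
      have := (Finset.mem_filter.mp hp).1
      exact ((hΦmem f p).mp this).choose⟩ : {p : V × V // G.Adj p.1 p.2}))
    · intro p hp
      obtain ⟨hp1, hp2⟩ := Finset.mem_filter.mp hp
      refine Finset.mem_filter.mpr ⟨?_, ?_⟩
      · simp only [fib, Finset.mem_filter, Finset.mem_univ, true_and, hbdef, hσdef]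
        rw [hp2]
      · obtain ⟨h, hf⟩ := (hΦmem f p).mp hp1
        rw [show (⟨p, _⟩ : {p : V × V // G.Adj p.1 p.2}) = ⟨p, h⟩ from Subtype.ext rfl]
        rw [hfσ ⟨p, h⟩, hf]
        rfl
    · intro p hp p' hp' heq
      have h1 := congrArg Subtype.val heq
      simp only [hσdef] at h1
      exact Prod.ext (congrArg Prod.snd h1) (congrArg Prod.fst h1)
    · intro a ha
      obtain ⟨ha1, ha2⟩ := Finset.mem_filter.mp ha
      have hav : a.1.1 = v := by
        apply hecast
        simpa [fib, hbdef] using ha1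
      have hmemΦ : (a.1.2, a.1.1) ∈ Φ f := by
        rw [hΦmem]
        refine ⟨G.adj_symm a.2, ?_⟩
        have : (⟨(a.1.2, a.1.1), G.adj_symm a.2⟩ : {p : V × V // G.Adj p.1 p.2}) = σfun a :=
          Subtype.ext rfl
        rw [this, hfσ a, ha2]
        rfl
      refine ⟨(a.1.2, a.1.1), Finset.mem_filter.mpr ⟨hmemΦ, hav⟩, ?_⟩
      apply Subtype.ext
      simp [hσdef]
  have hEulOr : ∀ f, IsEul σfun bfun f → IsEulerianOrientation G (Φ f) := by
    intro f hf
    obtain ⟨hf1, hf2⟩ := hf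
    refine ⟨⟨?_, ?_⟩, ?_⟩
    · intro p hp
      exact ((hΦmem f p).mp hp).choose
    · intro u v huv
      rw [hΦmem' f ⟨(u,v), huv⟩, hΦmem' f ⟨(v,u), G.adj_symm huv⟩]
      have : (⟨(v,u), G.adj_symm huv⟩ : {p : V × V // G.Adj p.1 p.2}) = σfun ⟨(u,v), huv⟩ :=
        Subtype.ext rfl
      rw [this, hf1 ⟨(u,v), huv⟩]
      cases f ⟨(u,v), huv⟩ <;> simp
    · intro v
      rw [hcard_out f v, hcard_in f hf1 v]
      have hbal := hf2 (enc v)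
      have hsplit := bool_filter_split (fib bfun (enc v)) f
      omega
  -- injectivity and the card bound
  have hcount : eulCount σfun bfun
      ≤ (Finset.univ.filter (fun D : Finset (V × V) => IsEulerianOrientation G D)).card := by
    unfold eulCount
    apply Finset.card_le_card_of_injOn Φ
    · intro f hf
      simp only [Finset.coe_filter, Finset.mem_univ, true_and, Set.mem_setOf_eq] at hf ⊢
      exact hEulOr f hf
    · intro f hf g hg hfg
      simp only [Finset.coe_filter, Set.mem_setOf_eq] at hf hg
      funext a
      have h1 := (hΦmem' f a).symm
      have h2 := hΦmem' g a
      rw [hfg] at h1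
      have h3 : f a = true ↔ g a = true := h1.trans h2
      cases hfa : f a <;> cases hga : g a <;> simp_all
  -- ncard equality
  have hncard : ({D : Finset (V × V) | IsEulerianOrientation G D}.ncard : ℝ)
      = ((Finset.univ.filter (fun D : Finset (V × V) => IsEulerianOrientation G D)).card : ℝ) := by
    congr 1
    rw [show {D : Finset (V × V) | IsEulerianOrientation G D}
        = ↑(Finset.univ.filter (fun D : Finset (V × V) => IsEulerianOrientation G D)) from by
      ext D; simp]
    rw [Set.ncard_coe_finset]
  calc (∏ v : V, ((G.degree v).choose (G.degree v / 2) : ℝ) / 2 ^ (G.degree v / 2))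
      = ∏ v : V, cfun (G.degree v) := by rfl
    _ = ∏ u ∈ Finset.univ.image bfun, cfun (fib bfun u).card := hP1
    _ ≤ (eulCount σfun bfun : ℝ) := habst
    _ ≤ _ := by
        rw [hncard]
        exact_mod_cast hcount
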